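/- Let l ≥ 1 and let F : ℂ^l → ℂ be real-Fréchet differentiable at every point. For k = 1,…,l define f_k(z) = ∂F/∂z̄_k(z) + conj(∂F/∂z_k(z)). Suppose there exist positive real numbers σ_1,…,σ_l such that for every θ ∈ ℝ and every z = (z_1,…,z_l) ∈ ℂ^l one has Re F(e^{iσ_1θ}z_1,…,e^{iσ_lθ}z_l) = Re F(z_1,…,z_l). Then for every z ∈ ℂ^l, Im ( Σ_{k=1}^{l} σ_k · f_k(z) · conj(z_k) ) = 0. -/
import Mathlib
open Complex

private lemma stmt0_key (σ : ℝ) (a b z : ℂ) :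
    ((σ:ℂ) * ((1/2:ℂ)*(a + I*b) + (starRingEnd ℂ) ((1/2:ℂ)*(a - I*b))) * (starRingEnd ℂ) z).im
    = ((-(σ * z.im)) • a + (σ * z.re) • b).re := by
  simp [Complex.ext_iff, Complex.mul_im, Complex.mul_re]
  ring



/-- The Wirtinger derivative `∂F/∂z_m` at `z`, defined from the real Fréchet derivative:
`∂F/∂z_m(z) = (1/2)(DF(z)(e_m) − i·DF(z)(i·e_m))`. -/
noncomputable def wirtingerDz {l : ℕ} (F : (Fin l → ℂ) → ℂ) (z : Fin l → ℂ) (m : Fin l) : ℂ :=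
  (1 / 2 : ℂ) * (fderiv ℝ F z (Pi.single m 1) - Complex.I * fderiv ℝ F z (Pi.single m Complex.I))

/-- The Wirtinger derivative `∂F/∂z̄_m` at `z`, defined from the real Fréchet derivative:
`∂F/∂z̄_m(z) = (1/2)(DF(z)(e_m) + i·DF(z)(i·e_m))`. -/
noncomputable def wirtingerDzBar {l : ℕ} (F : (Fin l → ℂ) → ℂ) (z : Fin l → ℂ) (m : Fin l) : ℂ :=
  (1 / 2 : ℂ) * (fderiv ℝ F z (Pi.single m 1) + Complex.I * fderiv ℝ F z (Pi.single m Complex.I))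

/-- if `F : ℂ^l → ℂ` is real-differentiable and gauge invariant with positive
weights `σ_k` (the real part of `F` is unchanged by `z_k ↦ e^{iσ_kθ} z_k`), then with
`f_k = ∂F/∂z̄_k + conj (∂F/∂z_k)` one has `Im (Σ_k σ_k f_k(z) conj (z_k)) = 0`. -/
theorem stmt0 (l : ℕ) (hl : 1 ≤ l) (F : (Fin l → ℂ) → ℂ)
    (hF : Differentiable ℝ F) (σ : Fin l → ℝ) (hσ : ∀ k, 0 < σ k)
    (hinv : ∀ θ : ℝ, ∀ z : Fin l → ℂ,
      (F (fun k => Complex.exp (Complex.I * (σ k * θ)) * z k)).re = (F z).re) :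
    ∀ z : Fin l → ℂ,
      (∑ k, (σ k : ℂ) * (wirtingerDzBar F z k + (starRingEnd ℂ) (wirtingerDz F z k)) *
        (starRingEnd ℂ) (z k)).im = 0 := by
  intro z
  simp only [wirtingerDz, wirtingerDzBar]
  set L := fderiv ℝ F z with hL
  set v : Fin l → ℂ := fun k => I * σ k * z k with hv
  -- derivative of the curve
  have hc : HasDerivAt (fun θ : ℝ => (fun k => Complex.exp (I * (σ k * θ)) * z k)) v 0 := by
    rw [hasDerivAt_pi]
    intro k
    have h1 : HasDerivAt (fun θ : ℝ => I * ((σ k :ℂ) * (θ:ℝ))) (I * σ k) 0 := by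
      have : HasDerivAt (fun θ : ℝ => ((θ:ℝ):ℂ)) 1 0 := Complex.ofRealCLM.hasDerivAt
      simpa using (this.const_mul ((σ k :ℂ))).const_mul I
    simpa [hv] using h1.cexp.mul_const (z k)
  have hc0 : (fun k => Complex.exp (I * (σ k * (0:ℝ))) * z k) = z := by
    funext k; simp
  have hFz : HasFDerivAt F L z := (hF z).hasFDerivAt
  have hFz' : HasFDerivAt F L ((fun θ : ℝ => (fun k => Complex.exp (I * (σ k * θ)) * z k)) 0) := by
    simpa [hc0] using hFz
  have hcomp : HasDerivAt (fun θ : ℝ => F (fun k => Complex.exp (I * (σ k * θ)) * z k)) (L v) 0 :=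
    hFz'.comp_hasDerivAt 0 hc
  have hre : HasDerivAt (fun θ : ℝ => (F (fun k => Complex.exp (I * (σ k * θ)) * z k)).re) (L v).re 0 :=
    (Complex.reCLM.hasFDerivAt.comp_hasDerivAt 0 hcomp)
  have hconst : (fun θ : ℝ => (F (fun k => Complex.exp (I * (σ k * θ)) * z k)).re) = fun _ => (F z).re := by
    funext θ; exact hinv θ z
  have h0 : (L v).re = 0 := by
    have h2 : HasDerivAt (fun _ : ℝ => (F z).re) ((L v).re) 0 := by rw [← hconst]; exact hre
    have h3 : HasDerivAt (fun _ : ℝ => (F z).re) (0:ℝ) 0 := hasDerivAt_const _ _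
    exact h2.unique h3
  -- decompose L v
  have hdecomp : L v = ∑ k, ((-(σ k * (z k).im)) • L (Pi.single k 1) + (σ k * (z k).re) • L (Pi.single k I) : ℂ) := by
    have : v = ∑ k, ((-(σ k * (z k).im)) • (Pi.single k (1:ℂ) : Fin l → ℂ) + (σ k * (z k).re) • (Pi.single k I : Fin l → ℂ)) := by
      funext j
      rw [Finset.sum_apply]
      rw [Finset.sum_eq_single j]
      · simp only [hv, Pi.add_apply, Pi.smul_apply, Pi.single_eq_same, Complex.real_smul, Complex.ext_iff, Complex.add_re, Complex.add_im, Complex.mul_re, Complex.mul_im, Complex.I_re, Complex.I_im, Complex.ofReal_re, Complex.ofReal_im, Complex.one_re, Complex.one_im]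
        constructor <;> ring
      · intro b _ hb; simp [Pi.single_eq_of_ne' hb]
      · simp
    rw [this, map_sum]
    simp
  calc (∑ k, (σ k : ℂ) * ((1 / 2 : ℂ) * (L (Pi.single k 1) + Complex.I * L (Pi.single k Complex.I)) + (starRingEnd ℂ) ((1 / 2 : ℂ) * (L (Pi.single k 1) - Complex.I * L (Pi.single k Complex.I)))) * (starRingEnd ℂ) (z k)).im
      = ∑ k, ((-(σ k * (z k).im)) • L (Pi.single k 1) + (σ k * (z k).re) • L (Pi.single k I) : ℂ).re := by
        rw [Complex.im_sum]
        exact Finset.sum_congr rfl fun k _ => stmt0_key (σ k) _ _ _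
    _ = (L v).re := by rw [hdecomp, Complex.re_sum]
    _ = 0 := h0
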